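/- arXiv:1308.3782 — 2 statements merged into one kernel-verified Lean document; each statement's English description precedes it below -/
import Mathlib

section
/- Let s > 0 and M > 0, and let p_ζ(ξ) = |ξ − s e₂|² − s² − 2 i s ξ₁ with characteristic set Σ_ζ = {ξ : ξ₁ = 0, |ξ − s e₂| = s} ⊂ ℝⁿ, n ≥ 3. Then there are constants c_M, C_M > 0 independent of s such that for all ξ with |ξ| ≤ M s, c_M · s · d(ξ, Σ_ζ) ≤ |p_ζ(ξ)| ≤ C_M · s · d(ξ, Σ_ζ). -/
private lemma coord_abs_le_norm {n : ℕ} (x : EuclideanSpace ℝ (Fin n)) (i : Fin n) :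
    |x i| ≤ ‖x‖ := by
  have h := abs_real_inner_le_norm (EuclideanSpace.single i (1:ℝ)) x
  simpa [EuclideanSpace.inner_single_left, EuclideanSpace.norm_single] using h

private lemma key {n : ℕ} (h0 : 0 < n) (h1 : 1 < n) (h2 : 2 < n)
    (M : ℝ) (hM : 0 < M) (s : ℝ) (hs : 0 < s)
    (ξ : EuclideanSpace ℝ (Fin n)) (hξ : ‖ξ‖ ≤ M * s) :
    1/4 * (s * Metric.infDist ξ
        {η : EuclideanSpace ℝ (Fin n) | η ⟨0, h0⟩ = 0 ∧
          ‖η - EuclideanSpace.single (⟨1, h1⟩ : Fin n) s‖ = s}) ≤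
      ‖(((‖ξ - EuclideanSpace.single (⟨1, h1⟩ : Fin n) s‖ ^ 2 - s ^ 2 : ℝ) : ℂ)
          - 2 * Complex.I * ((s * ξ ⟨0, h0⟩ : ℝ) : ℂ))‖ ∧
    ‖(((‖ξ - EuclideanSpace.single (⟨1, h1⟩ : Fin n) s‖ ^ 2 - s ^ 2 : ℝ) : ℂ)
          - 2 * Complex.I * ((s * ξ ⟨0, h0⟩ : ℝ) : ℂ))‖ ≤
      (2*(M+2)) * (s * Metric.infDist ξ
        {η : EuclideanSpace ℝ (Fin n) | η ⟨0, h0⟩ = 0 ∧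
          ‖η - EuclideanSpace.single (⟨1, h1⟩ : Fin n) s‖ = s}) := by
  set i0 : Fin n := ⟨0, h0⟩ with hi0
  set i1 : Fin n := ⟨1, h1⟩ with hi1
  set i2 : Fin n := ⟨2, h2⟩ with hi2
  set e2 : EuclideanSpace ℝ (Fin n) := EuclideanSpace.single i1 s with he2
  set t : ℝ := ξ i0 with htdef
  set r : ℝ := ‖ξ - e2‖ with hrdef
  set T : Set (EuclideanSpace ℝ (Fin n)) := {η | η i0 = 0 ∧ ‖η - e2‖ = s} with hT
  set D : ℝ := Metric.infDist ξ T with hDdef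
  set p : ℂ := ((r^2 - s^2 : ℝ) : ℂ) - 2*Complex.I*((s*t : ℝ):ℂ) with hp
  set A : ℝ := ‖p‖ with hA
  -- complex modulus facts
  have hre : p.re = r^2 - s^2 := by simp [hp, pow_two]
  have him : p.im = -(2*(s*t)) := by simp [hp, pow_two]
  have habs_im : |p.im| = 2*(s * |t|) := by
    rw [him, abs_neg, abs_mul, abs_mul, abs_two, abs_of_pos hs]
  have h1abs : |r - s| * (r + s) ≤ A := by
    have h := Complex.abs_re_le_norm p
    rw [hre] at h
    have : |r^2 - s^2| = |r - s| * (r + s) := by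
      rw [show r^2 - s^2 = (r-s)*(r+s) by ring, abs_mul,
        abs_of_nonneg (by positivity : (0:ℝ) ≤ r+s)]
    linarith [this ▸ h]
  have h2abs : 2*(s * |t|) ≤ A := by
    have h := Complex.abs_im_le_norm p
    rwa [habs_im] at h
  have h3abs : A ≤ |r - s| * (r + s) + 2*(s * |t|) := by
    have h := Complex.norm_le_abs_re_add_abs_im p
    rw [hre, habs_im] at h
    have : |r^2 - s^2| = |r - s| * (r + s) := by
      rw [show r^2 - s^2 = (r-s)*(r+s) by ring, abs_mul,
        abs_of_nonneg (by positivity : (0:ℝ) ≤ r+s)]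
    linarith [this ▸ h]
  -- r is bounded
  have hrnn : 0 ≤ r := norm_nonneg _
  have he2norm : ‖e2‖ = s := by
    rw [he2, EuclideanSpace.norm_single, Real.norm_eq_abs, abs_of_pos hs]
  have hrle : r ≤ (M+1)*s := by
    have h := norm_sub_le ξ e2
    rw [he2norm] at h
    rw [hrdef]; nlinarith
  -- the set T is nonempty
  have hmem0 : e2 + EuclideanSpace.single i2 s ∈ T := by
    constructor
    · show (e2 + EuclideanSpace.single i2 s) i0 = 0
      have : (e2 + EuclideanSpace.single i2 s) i0 = e2 i0 + EuclideanSpace.single i2 s i0 := rfl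
      rw [this, he2]
      simp [EuclideanSpace.single_apply, hi0, hi1, hi2]
    · show ‖e2 + EuclideanSpace.single i2 s - e2‖ = s
      rw [add_sub_cancel_left, EuclideanSpace.norm_single, Real.norm_eq_abs, abs_of_pos hs]
  have hne : T.Nonempty := ⟨_, hmem0⟩
  -- lower bound on D
  have hDlow : (|r - s| + |t|)/2 ≤ D := by
    by_contra hcon
    push_neg at hcon
    obtain ⟨η, hη, hlt⟩ := (Metric.infDist_lt_iff hne).1 hcon
    obtain ⟨hη0, hηs⟩ := hη
    have hb1 : |t| ≤ ‖ξ - η‖ := by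
      have h := coord_abs_le_norm (ξ - η) i0
      have hcoord : (ξ - η) i0 = t := by
        have : (ξ - η) i0 = ξ i0 - η i0 := rfl
        rw [this, hη0, sub_zero]
      rwa [hcoord] at h
    have hb2 : |r - s| ≤ ‖ξ - η‖ := by
      have h := abs_norm_sub_norm_le (ξ - e2) (η - e2)
      rw [hηs, ← hrdef] at h
      have heq : (ξ - e2) - (η - e2) = ξ - η := by abel
      rwa [heq] at h
    rw [dist_eq_norm] at hlt
    linarith
  -- upper bound on D
  have hDup : D ≤ 2*(|r - s| + |t|) := by
    set v : EuclideanSpace ℝ (Fin n) := ξ - EuclideanSpace.single i0 t - e2 with hv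
    by_cases hv0 : v = 0
    · have hxe : ξ - e2 = EuclideanSpace.single i0 t := by
        have h' : ξ - EuclideanSpace.single i0 t - e2 = 0 := by rw [← hv]; exact hv0
        have : ξ - e2 = ξ - EuclideanSpace.single i0 t - e2 + EuclideanSpace.single i0 t := by
          abel
        rw [this, h', zero_add]
      have hrt : r = |t| := by rw [hrdef, hxe, EuclideanSpace.norm_single, Real.norm_eq_abs]
      have hd0 : dist ξ (e2 + EuclideanSpace.single i2 s) ≤ |t| + s := by
        rw [dist_eq_norm]
        have heq : ξ - (e2 + EuclideanSpace.single i2 s)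
            = (ξ - e2) - EuclideanSpace.single i2 s := by abel
        rw [heq]
        calc ‖(ξ - e2) - EuclideanSpace.single i2 s‖
            ≤ ‖ξ - e2‖ + ‖EuclideanSpace.single i2 s‖ := norm_sub_le _ _
          _ = |t| + s := by
              rw [← hrdef, hrt, EuclideanSpace.norm_single, Real.norm_eq_abs, abs_of_pos hs]
      have hDle : D ≤ dist ξ (e2 + EuclideanSpace.single i2 s) :=
        Metric.infDist_le_dist_of_mem hmem0
      have ha1 : |t| - s ≤ |(|t| - s)| := le_abs_self _
      have ha2 : -(|(|t| - s)|) ≤ |t| - s := neg_abs_le _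
      rw [hrt]
      linarith
    · set ρ : ℝ := ‖v‖ with hρdef
      have hρpos : 0 < ρ := norm_pos_iff.mpr hv0
      set η : EuclideanSpace ℝ (Fin n) := e2 + (s/ρ) • v with hηdef
      have hηmem : η ∈ T := by
        constructor
        · show η i0 = 0
          have hvi0 : v i0 = 0 := by
            have h' : v i0 = ξ i0 - EuclideanSpace.single i0 t i0 - e2 i0 := rfl
            rw [h', he2]
            simp [EuclideanSpace.single_apply, hi0, hi1, htdef]
          have h'' : η i0 = e2 i0 + (s/ρ) * v i0 := rfl
          rw [h'', hvi0, he2, mul_zero]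
          simp [EuclideanSpace.single_apply, hi0, hi1]
        · show ‖η - e2‖ = s
          have heq : η - e2 = (s/ρ) • v := by rw [hηdef]; abel
          rw [heq, norm_smul, Real.norm_eq_abs, ← hρdef,
            abs_of_pos (div_pos hs hρpos), div_mul_cancel₀ _ (ne_of_gt hρpos)]
      have hdist : dist ξ η ≤ |t| + |ρ - s| := by
        rw [dist_eq_norm]
        have h1 : (1 - s/ρ) • v = v - (s/ρ) • v := by rw [sub_smul, one_smul]
        have hsplit : ξ - η = EuclideanSpace.single i0 t + (1 - s/ρ) • v := by
          rw [hηdef, h1, hv]; abel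
        rw [hsplit]
        calc ‖EuclideanSpace.single i0 t + (1 - s/ρ) • v‖
            ≤ ‖EuclideanSpace.single i0 t‖ + ‖(1 - s/ρ) • v‖ := norm_add_le _ _
          _ = |t| + |1 - s/ρ| * ρ := by
              rw [EuclideanSpace.norm_single, norm_smul, Real.norm_eq_abs, Real.norm_eq_abs, ← hρdef]
          _ = |t| + |ρ - s| := by
              have hx : |1 - s/ρ| * ρ = |ρ - s| := by
                rw [show |1 - s/ρ| * ρ = |(1 - s/ρ) * ρ| by
                    rw [abs_mul, abs_of_pos hρpos],
                  show (1 - s/ρ) * ρ = ρ - s by field_simp]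
              rw [hx]
      have hρr : |ρ - s| ≤ |r - s| + |t| := by
        have h1 : |‖ξ - e2‖ - ‖v‖| ≤ ‖(ξ - e2) - v‖ := abs_norm_sub_norm_le _ _
        have h2 : (ξ - e2) - v = EuclideanSpace.single i0 t := by rw [hv]; abel
        rw [h2, EuclideanSpace.norm_single, Real.norm_eq_abs, ← hrdef, ← hρdef] at h1
        calc |ρ - s| ≤ |ρ - r| + |r - s| := abs_sub_le _ _ _
          _ ≤ |r - s| + |t| := by rw [abs_sub_comm]; linarith
      have hDle : D ≤ dist ξ η := Metric.infDist_le_dist_of_mem hηmem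
      have := abs_nonneg t
      have := abs_nonneg (r - s)
      linarith
  -- final combination
  have hAnn : 0 ≤ A := norm_nonneg p
  refine ⟨?_, ?_⟩
  · -- lower bound
    have hp1 : s * D ≤ s * (2*(|r - s| + |t|)) := mul_le_mul_of_nonneg_left hDup hs.le
    linarith [hp1, h1abs, h2abs, hAnn, mul_nonneg (abs_nonneg (r-s)) hrnn]
  · -- upper bound
    have hE2D : |r - s| + |t| ≤ 2*D := by linarith
    have hp2 : s*(|r - s| + |t|) ≤ s*(2*D) := mul_le_mul_of_nonneg_left hE2D hs.le
    have hp3 : (M+2)*(s*(|r - s| + |t|)) ≤ (M+2)*(s*(2*D)) :=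
      mul_le_mul_of_nonneg_left hp2 (by linarith)
    have hp4 : |r - s| * (r + s) ≤ |r - s| * ((M+2)*s) :=
      mul_le_mul_of_nonneg_left (by linarith) (abs_nonneg _)
    linarith [h3abs, hp4, hp3, mul_nonneg (mul_nonneg hs.le (abs_nonneg t)) hM.le]

/-- Two-sided estimate `|p_ζ(ξ)| ∼_M s · d(ξ, Σ_ζ)` in the region `|ξ| ≤ M s`,
with constants independent of `s`, where
`p_ζ(ξ) = |ξ − s e₂|² − s² − 2 i s ξ₁` and
`Σ_ζ = {ξ : ξ₁ = 0, |ξ − s e₂| = s}`. -/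
theorem stmt4 (n : ℕ) (hn : 3 ≤ n) (M : ℝ) (hM : 0 < M) :
    ∃ c > 0, ∃ C > 0, ∀ s : ℝ, 0 < s → ∀ ξ : EuclideanSpace ℝ (Fin n),
      ‖ξ‖ ≤ M * s →
      c * (s * Metric.infDist ξ
          {η : EuclideanSpace ℝ (Fin n) |
            η ⟨0, by omega⟩ = 0 ∧
            ‖η - EuclideanSpace.single (⟨1, by omega⟩ : Fin n) s‖ = s}) ≤
        ‖(((‖ξ - EuclideanSpace.single (⟨1, by omega⟩ : Fin n) s‖ ^ 2 - s ^ 2 : ℝ) : ℂ)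
            - 2 * Complex.I * (s * ξ ⟨0, by omega⟩ : ℝ))‖ ∧
      ‖(((‖ξ - EuclideanSpace.single (⟨1, by omega⟩ : Fin n) s‖ ^ 2 - s ^ 2 : ℝ) : ℂ)
            - 2 * Complex.I * (s * ξ ⟨0, by omega⟩ : ℝ))‖ ≤
        C * (s * Metric.infDist ξ
          {η : EuclideanSpace ℝ (Fin n) |
            η ⟨0, by omega⟩ = 0 ∧
            ‖η - EuclideanSpace.single (⟨1, by omega⟩ : Fin n) s‖ = s}) := by
  exact ⟨1/4, by norm_num, 2*(M+2), by linarith, fun s hs ξ hξ =>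
    key (by omega) (by omega) (by omega) M hM s hs ξ hξ⟩
end

section
/- Let n ≥ 2, m ≥ 2 an integer, s > 0, and fix j ∈ {2,…,n}. Define the tempered distribution E = c ∂_{η_j}^{m−1}(1/(η_j + i η₁)) on ℝⁿ, where c = (−1)^{m−1}/(s^m (m−1)!) and the function 1/(η_j + i η₁) is locally integrable on ℝⁿ (n ≥ 2). Then s^m (η_j + i η₁)^m · E = 1 as tempered distributions, i.e. for every Schwartz function φ, ⟨E, s^m (η_j + i η₁)^m φ⟩ = ∫_{ℝⁿ} φ dη. -/
open MeasureTheory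

set_option maxHeartbeats 1000000

/-- Directional derivative along the `j`-th coordinate, as an operator on
complex-valued functions on `ℝⁿ`. -/
noncomputable def coordDeriv (n : ℕ) (j : Fin n) (f : (Fin n → ℝ) → ℂ) :
    (Fin n → ℝ) → ℂ :=
  fun x => fderiv ℝ f x (Pi.single j 1)


noncomputable def WL (n : ℕ) (j i0 : Fin n) : (Fin n → ℝ) →L[ℝ] ℂ :=
  Complex.ofRealCLM.comp (ContinuousLinearMap.proj j) +
    Complex.I • Complex.ofRealCLM.comp (ContinuousLinearMap.proj i0)

lemma WL_apply (n : ℕ) (j i0 : Fin n) (x : Fin n → ℝ) :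
    WL n j i0 x = (x j : ℂ) + Complex.I * (x i0 : ℝ) := by
  simp [WL, smul_eq_mul]

lemma WL_single (n : ℕ) (j i0 : Fin n) (hji : j ≠ i0) :
    WL n j i0 (Pi.single j 1) = 1 := by
  rw [WL_apply, Pi.single_eq_same, Pi.single_eq_of_ne (Ne.symm hji)]
  simp

lemma WL_ae_ne_zero (n : ℕ) (j i0 : Fin n) :
    ∀ᵐ x : Fin n → ℝ, WL n j i0 x ≠ 0 := by
  have h0 : (volume : Measure (Fin n → ℝ)) {x | WL n j i0 x = 0} = 0 := by
    refine measure_mono_null (t := (LinearMap.ker (LinearMap.proj j :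
      (Fin n → ℝ) →ₗ[ℝ] ℝ) : Set (Fin n → ℝ))) ?_ ?_
    · intro x hx
      have : (WL n j i0 x).re = 0 := by rw [Set.mem_setOf_eq.mp hx]; simp
      rw [WL_apply] at this
      simp only [Complex.add_re, Complex.ofReal_re, Complex.mul_re, Complex.I_re,
        Complex.I_im, Complex.ofReal_im, Complex.ofReal_re] at this
      simpa using this
    · apply Measure.addHaar_submodule
      intro h
      have : (Pi.single j 1 : Fin n → ℝ) ∈ LinearMap.ker (LinearMap.proj j :
          (Fin n → ℝ) →ₗ[ℝ] ℝ) := h ▸ Submodule.mem_top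
      simp [LinearMap.mem_ker] at this
  rw [ae_iff]
  simpa using h0


lemma integral_pderiv_zero {n : ℕ} (ψ : SchwartzMap (Fin n → ℝ) ℂ) (v : Fin n → ℝ) :
    ∫ x : Fin n → ℝ, fderiv ℝ ψ x v = 0 := by
  set g := SchwartzMap.fderivCLM ℝ (E := Fin n → ℝ) (F := ℂ) ψ with hg
  -- decay bound for g
  obtain ⟨C, hCpos, hC⟩ : ∃ C, 0 ≤ C ∧ ∀ y : Fin n → ℝ,
      (1 + ‖y‖) ^ (n + 1) * ‖g y‖ ≤ C := by
    refine ⟨2 ^ (n + 1) *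
      (Finset.Iic ((n+1, 0) : ℕ × ℕ)).sup (fun m => SchwartzMap.seminorm ℝ m.1 m.2) g,
      by positivity, fun y => ?_⟩
    have := SchwartzMap.one_add_le_sup_seminorm_apply (𝕜 := ℝ) (m := ((n+1 : ℕ), (0 : ℕ)))
      (k := n + 1) (n := 0) le_rfl le_rfl g y
    simpa [norm_iteratedFDeriv_zero] using this
  set bound : (Fin n → ℝ) → ℝ :=
    fun x => (C * (1 + ‖v‖) ^ (n + 1) * ‖v‖) * ((1 + ‖x‖) ^ (n + 1))⁻¹ with hbd
  have key := hasDerivAt_integral_of_dominated_loc_of_deriv_le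
    (F := fun (t : ℝ) (x : Fin n → ℝ) => ψ (x + t • v))
    (F' := fun (t : ℝ) (x : Fin n → ℝ) => fderiv ℝ ψ (x + t • v) v)
    (x₀ := (0:ℝ)) (bound := bound) (μ := volume) (s := Metric.ball 0 1) (Metric.ball_mem_nhds _ one_pos)
    (Filter.Eventually.of_forall fun t =>
      (ψ.continuous.comp (by continuity)).aestronglyMeasurable)
    (by simpa using ψ.integrable)
    (by
      refine Continuous.aestronglyMeasurable ?_
      have : Continuous fun x : Fin n → ℝ => fderiv ℝ ψ x v :=
        (ContinuousLinearMap.apply ℝ ℂ v).continuous.comp g.continuous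
      exact this.comp (by continuity))
    (by
      refine Filter.Eventually.of_forall fun x => fun t ht => ?_
      have h1 : ‖fderiv ℝ ψ (x + t • v) v‖ ≤ ‖g (x + t • v)‖ * ‖v‖ :=
        ContinuousLinearMap.le_opNorm _ v
      have hset : (1 + ‖x‖) ^ (n+1) ≤ (1 + ‖v‖) ^ (n+1) * (1 + ‖x + t • v‖) ^ (n+1) := by
        rw [← mul_pow]
        apply pow_le_pow_left₀ (by positivity)
        have htle : ‖t • v‖ ≤ ‖v‖ := by
          rw [norm_smul]
          have : |t| ≤ 1 := by
            have := mem_ball_iff_norm.mp ht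
            simpa using this.le
          calc |t| * ‖v‖ ≤ 1 * ‖v‖ := by
                exact mul_le_mul_of_nonneg_right (by simpa using this) (norm_nonneg _)
            _ = ‖v‖ := one_mul _
        have : ‖x‖ ≤ ‖x + t • v‖ + ‖v‖ := by
          calc ‖x‖ = ‖(x + t • v) + (-(t • v))‖ := by ring_nf
            _ ≤ ‖x + t • v‖ + ‖t • v‖ := by
                simpa using norm_add_le (x + t • v) (-(t • v))
            _ ≤ ‖x + t • v‖ + ‖v‖ := by linarith
        nlinarith [norm_nonneg v, norm_nonneg (x + t • v), norm_nonneg x]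
      have h2 : ‖g (x + t • v)‖ ≤ C * (1 + ‖v‖)^(n+1) * ((1 + ‖x‖) ^ (n + 1))⁻¹ := by
        have hCy := hC (x + t • v)
        have hp1 : (0:ℝ) < (1 + ‖x + t • v‖) ^ (n+1) := by positivity
        have hp2 : (0:ℝ) < (1 + ‖x‖) ^ (n+1) := by positivity
        rw [← div_eq_mul_inv, le_div_iff₀ hp2]
        calc ‖g (x + t • v)‖ * (1 + ‖x‖) ^ (n + 1)
            ≤ ‖g (x + t • v)‖ * ((1 + ‖v‖) ^ (n+1) * (1 + ‖x + t • v‖) ^ (n+1)) :=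
              mul_le_mul_of_nonneg_left hset (norm_nonneg _)
          _ = (1 + ‖v‖) ^ (n+1) * ((1 + ‖x + t • v‖) ^ (n+1) * ‖g (x + t • v)‖) := by ring
          _ ≤ (1 + ‖v‖) ^ (n+1) * C :=
              mul_le_mul_of_nonneg_left hCy (by positivity)
          _ = C * (1 + ‖v‖) ^ (n+1) := mul_comm _ _
      calc ‖fderiv ℝ ψ (x + t • v) v‖ ≤ ‖g (x + t • v)‖ * ‖v‖ := h1
        _ ≤ (C * (1 + ‖v‖)^(n+1) * ((1 + ‖x‖) ^ (n + 1))⁻¹) * ‖v‖ :=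
            mul_le_mul_of_nonneg_right h2 (norm_nonneg _)
        _ = bound x := by rw [hbd]; ring)
    (by
      apply Integrable.const_mul
      have hi := integrable_one_add_norm (E := Fin n → ℝ) (μ := volume) (r := ((n:ℝ)+1))
        (by simp [Module.finrank_fintype_fun_eq_card])
      have hcast : ∀ x : Fin n → ℝ, (1 + ‖x‖) ^ ((n:ℝ)+1) = (1 + ‖x‖) ^ (n+1) := by
        intro x
        rw [show ((n:ℝ)+1) = ((n+1:ℕ):ℝ) by push_cast; ring, Real.rpow_natCast]
      have heq : (fun x : Fin n → ℝ => (1 + ‖x‖) ^ (-((n:ℝ)+1)))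
          = fun x : Fin n → ℝ => ((1 + ‖x‖) ^ (n+1))⁻¹ := funext fun x => by
        rw [Real.rpow_neg (by positivity), hcast x]
      exact heq ▸ hi)
    (by
      refine Filter.Eventually.of_forall fun x => fun t ht => ?_
      have h1 : HasDerivAt (fun s : ℝ => x + s • v) v t := by
        simpa using ((hasDerivAt_id t).smul_const v).const_add x
      exact (ψ.differentiableAt.hasFDerivAt).comp_hasDerivAt t h1)
  obtain ⟨-, hD⟩ := key
  have hconst : (fun t : ℝ => ∫ x : Fin n → ℝ, ψ (x + t • v)) =
      fun _ => ∫ x : Fin n → ℝ, ψ x := by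
    funext t
    exact integral_add_right_eq_self (μ := volume) (fun x => (ψ x : ℂ)) (t • v)
  rw [hconst] at hD
  have := hD.unique (hasDerivAt_const 0 _)
  simpa using this

noncomputable def DD (n : ℕ) (j : Fin n) :
    SchwartzMap (Fin n → ℝ) ℂ →L[ℝ] SchwartzMap (Fin n → ℝ) ℂ :=
  LineDeriv.lineDerivOpCLM ℝ (SchwartzMap (Fin n → ℝ) ℂ) (Pi.single j (1 : ℝ) : Fin n → ℝ)

noncomputable def MW (n : ℕ) (j i0 : Fin n) :
    SchwartzMap (Fin n → ℝ) ℂ →L[ℝ] SchwartzMap (Fin n → ℝ) ℂ :=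
  SchwartzMap.bilinLeftCLM (ContinuousLinearMap.mul ℝ ℂ)
    (WL n j i0).hasTemperateGrowth

lemma MW_apply (n : ℕ) (j i0 : Fin n) (χ : SchwartzMap (Fin n → ℝ) ℂ) (x : Fin n → ℝ) :
    MW n j i0 χ x = χ x * WL n j i0 x := rfl

lemma DD_apply (n : ℕ) (j : Fin n) (χ : SchwartzMap (Fin n → ℝ) ℂ) (x : Fin n → ℝ) :
    DD n j χ x = fderiv ℝ χ x (Pi.single j 1) := rfl

lemma coordDeriv_iter (n : ℕ) (j : Fin n) (k : ℕ) (χ : SchwartzMap (Fin n → ℝ) ℂ) :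
    (coordDeriv n j)^[k] ⇑χ = ⇑((DD n j)^[k] χ) := by
  induction k generalizing χ with
  | zero => rfl
  | succ k ih =>
    rw [Function.iterate_succ_apply, Function.iterate_succ_apply]
    rw [show coordDeriv n j ⇑χ = ⇑(DD n j χ) from rfl]
    exact ih (DD n j χ)

lemma MW_iter_apply (n : ℕ) (j i0 : Fin n) (k : ℕ) (χ : SchwartzMap (Fin n → ℝ) ℂ)
    (x : Fin n → ℝ) :
    ((MW n j i0)^[k] χ) x = (WL n j i0 x) ^ k * χ x := by
  induction k generalizing χ with
  | zero => simp
  | succ k ih =>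
    rw [Function.iterate_succ_apply', MW_apply, ih]
    ring

lemma prodrule (n : ℕ) (j i0 : Fin n) (hji : j ≠ i0) (χ : SchwartzMap (Fin n → ℝ) ℂ) :
    DD n j (MW n j i0 χ) = χ + MW n j i0 (DD n j χ) := by
  apply SchwartzMap.ext
  intro x
  have hcoe : ⇑(MW n j i0 χ) = fun y => χ y * WL n j i0 y := rfl
  rw [DD_apply, hcoe, fderiv_fun_mul χ.differentiableAt (WL n j i0).differentiableAt]
  simp only [ContinuousLinearMap.add_apply, ContinuousLinearMap.coe_smul', Pi.smul_apply,
    (WL n j i0).fderiv, WL_single n j i0 hji, smul_eq_mul, mul_one]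
  rw [MW_apply, DD_apply]
  ring

lemma DD_MW_pow (n : ℕ) (j i0 : Fin n) (hji : j ≠ i0) (p : ℕ)
    (χ : SchwartzMap (Fin n → ℝ) ℂ) :
    DD n j ((MW n j i0)^[p+1] χ) =
      (((p : ℂ) + 1) • (MW n j i0)^[p] χ) + (MW n j i0)^[p+1] (DD n j χ) := by
  induction p generalizing χ with
  | zero =>
    simpa using prodrule n j i0 hji χ
  | succ p ih =>
    rw [show p + 1 + 1 = (p + 1) + 1 from rfl, Function.iterate_succ_apply,
      Function.iterate_succ_apply (MW n j i0) (p+1), ih (MW n j i0 χ)]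
    apply SchwartzMap.ext
    intro x
    rw [show ((MW n j i0)^[p+1] (DD n j (MW n j i0 χ))) =
      (MW n j i0)^[p+1] (χ + MW n j i0 (DD n j χ)) from by rw [prodrule n j i0 hji χ]]
    simp only [SchwartzMap.add_apply, SchwartzMap.smul_apply, MW_iter_apply, MW_apply,
      smul_eq_mul]
    push_cast
    ring

lemma key_s7 (n : ℕ) (j i0 : Fin n) (hji : j ≠ i0) (k : ℕ) (χ : SchwartzMap (Fin n → ℝ) ℂ) :
    ∫ x : Fin n → ℝ, (WL n j i0 x)⁻¹ * (((DD n j)^[k] ((MW n j i0)^[k+1] χ)) x) =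
      (k.factorial : ℂ) * ∫ x : Fin n → ℝ, χ x := by
  induction k generalizing χ with
  | zero =>
    rw [Nat.factorial_zero, Nat.cast_one, one_mul]
    apply integral_congr_ae
    filter_upwards [WL_ae_ne_zero n j i0] with x hx
    simp only [Function.iterate_zero, id_eq, MW_iter_apply, pow_one]
    field_simp
    ring
  | succ k ih =>
    set ρ : SchwartzMap (Fin n → ℝ) ℂ :=
      ((k : ℂ) + 2) • χ + MW n j i0 (DD n j χ) with hρ
    have hrw : (DD n j)^[k+1] ((MW n j i0)^[k+1+1] χ) =
        (DD n j)^[k] ((MW n j i0)^[k+1] ρ) := by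
      rw [Function.iterate_succ_apply]
      congr 1
      rw [DD_MW_pow n j i0 hji (k+1) χ]
      apply SchwartzMap.ext
      intro x
      simp only [hρ, SchwartzMap.add_apply, SchwartzMap.smul_apply, MW_iter_apply, MW_apply,
        smul_eq_mul]
      push_cast
      ring
    rw [hrw, ih ρ]
    have hMWint : ∫ x : Fin n → ℝ, (MW n j i0 (DD n j χ)) x = - ∫ x : Fin n → ℝ, χ x := by
      have h0 : ∫ x : Fin n → ℝ, (DD n j (MW n j i0 χ)) x = 0 :=
        integral_pderiv_zero (MW n j i0 χ) (Pi.single j 1)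
      rw [prodrule n j i0 hji χ] at h0
      have h1 : ∫ x : Fin n → ℝ, (χ x + (MW n j i0 (DD n j χ)) x) =
          (∫ x : Fin n → ℝ, χ x) + ∫ x : Fin n → ℝ, (MW n j i0 (DD n j χ)) x :=
        integral_add χ.integrable (MW n j i0 (DD n j χ)).integrable
      simp only [SchwartzMap.add_apply] at h0
      rw [h1] at h0
      linear_combination h0
    have hρint : ∫ x : Fin n → ℝ, ρ x =
        ((k : ℂ) + 2) * (∫ x : Fin n → ℝ, χ x) - ∫ x : Fin n → ℝ, χ x := by
      rw [hρ]
      simp only [SchwartzMap.add_apply, SchwartzMap.smul_apply, smul_eq_mul]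
      rw [integral_add ((((k : ℂ) + 2) • χ).integrable.congr ?_) 
        (MW n j i0 (DD n j χ)).integrable, hMWint]
      · rw [integral_const_mul]
        ring
      · filter_upwards with x
        rw [SchwartzMap.smul_apply, smul_eq_mul]
    rw [hρint, Nat.factorial_succ]
    push_cast
    ring

/-- The tempered distribution `E = c ∂_{η_j}^{m−1}(1/(η_j + i η₁))`,
`c = (−1)^{m−1}/(s^m (m−1)!)`, satisfies `s^m (η_j + i η₁)^m · E = 1`: tested
against any Schwartz function `φ`, the distributional pairing
`⟨E, s^m (η_j + i η₁)^m φ⟩ = c (−1)^{m−1} ∫ (η_j + i η₁)^{−1} ∂_{η_j}^{m−1}(s^m (η_j+iη₁)^m φ)`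
equals `∫ φ`. -/
theorem stmt7 (n m : ℕ) (hn : 2 ≤ n) (hm : 2 ≤ m) (s : ℝ) (hs : 0 < s)
    (j : Fin n) (hj : j ≠ ⟨0, by omega⟩) :
    ∀ φ : SchwartzMap (Fin n → ℝ) ℂ,
      ((-1 : ℂ) ^ (m - 1) / ((s : ℂ) ^ m * ((m - 1).factorial : ℂ))) *
          (-1 : ℂ) ^ (m - 1) *
          ∫ η : Fin n → ℝ,
            ((η j : ℂ) + Complex.I * (η ⟨0, by omega⟩ : ℝ))⁻¹ *
              ((coordDeriv n j)^[m - 1]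
                (fun η : Fin n → ℝ =>
                  (s : ℂ) ^ m *
                    ((η j : ℂ) + Complex.I * (η ⟨0, by omega⟩ : ℝ)) ^ m * φ η)) η =
        ∫ η : Fin n → ℝ, φ η := by
  intro φ
  have hn0 : 0 < n := by omega
  set i0 : Fin n := ⟨0, hn0⟩ with hi0
  have hji : j ≠ i0 := hj
  set ψ : SchwartzMap (Fin n → ℝ) ℂ := ((s : ℂ) ^ m) • φ with hψ
  have hm1 : m - 1 + 1 = m := by omega
  have hfun : (fun η : Fin n → ℝ =>
      (s : ℂ) ^ m * ((η j : ℂ) + Complex.I * (η i0 : ℝ)) ^ m * φ η)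
      = ⇑((MW n j i0)^[m] ψ) := by
    funext x
    rw [MW_iter_apply, WL_apply, hψ, SchwartzMap.smul_apply, smul_eq_mul]
    ring
  show ((-1 : ℂ) ^ (m - 1) / ((s : ℂ) ^ m * ((m - 1).factorial : ℂ))) *
          (-1 : ℂ) ^ (m - 1) *
          ∫ η : Fin n → ℝ,
            ((η j : ℂ) + Complex.I * (η i0 : ℝ))⁻¹ *
              ((coordDeriv n j)^[m - 1]
                (fun η : Fin n → ℝ =>
                  (s : ℂ) ^ m *
                    ((η j : ℂ) + Complex.I * (η i0 : ℝ)) ^ m * φ η)) η =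
        ∫ η : Fin n → ℝ, φ η
  rw [hfun, coordDeriv_iter]
  have hkey := key_s7 n j i0 hji (m - 1) ψ
  rw [hm1] at hkey
  simp_rw [← WL_apply n j i0]
  rw [hkey]
  have hψint : ∫ x : Fin n → ℝ, ψ x = (s : ℂ) ^ m * ∫ x : Fin n → ℝ, φ x := by
    simp only [hψ, SchwartzMap.smul_apply, smul_eq_mul]
    exact integral_const_mul _ _
  rw [hψint]
  have h1 : ((-1 : ℂ)) ^ (m - 1) * (-1) ^ (m - 1) = 1 := by
    rw [← pow_add]
    exact Even.neg_one_pow ⟨m - 1, rfl⟩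
  have hsne : (s : ℂ) ^ m ≠ 0 := pow_ne_zero _ (by exact_mod_cast hs.ne')
  have hfne : (((m - 1).factorial : ℕ) : ℂ) ≠ 0 :=
    Nat.cast_ne_zero.mpr (Nat.factorial_ne_zero _)
  field_simp
  linear_combination (∫ η : Fin n → ℝ, φ η) * h1
end
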